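/- arXiv:0909.1980 — 5 statements merged into one kernel-verified Lean document; each statement's English description precedes it below -/
import Mathlib

section
/- Let p satisfy (P), fix ā > 0 and ū ∈ A₀. Let Σ be C¹ on a neighborhood of (ā,ā,ū) in ℝ×ℝ×((0,∞)×ℝ) with values in ℝ² and satisfying Σ(a,a;u) = 0 for all (a,u) in the domain, and define Ψ(a⁻,u⁻;a⁺,u⁺) = (a⁺q⁺ − a⁻q⁻, a⁺P(u⁺) − a⁻P(u⁻)) − Σ(a⁻,a⁺;u⁻). Then the determinant of the 2×2 matrix whose first column is D_{u⁻}Ψ(ā,ū;ā,ū)·r₁(ū) and whose second column is D_{u⁺}Ψ(ā,ū;ā,ū)·r₂(ū) equals ā² λ₁(ū) λ₂(ū) (λ₂(ū) − λ₁(ū)), which is nonzero. -/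
/- STATEMENT 2: Let p satisfy (P), fix ā > 0 and ū ∈ A₀. Let Σ be C¹ near (ā,ā,ū)
with Σ(a,a;u) = 0 on the domain, and Ψ(a⁻,u⁻;a⁺,u⁺) =
(a⁺q⁺ − a⁻q⁻, a⁺P(u⁺) − a⁻P(u⁻)) − Σ(a⁻,a⁺;u⁻). Then the determinant of the 2×2
matrix with columns D_{u⁻}Ψ(ā,ū;ā,ū)·r₁(ū) and D_{u⁺}Ψ(ā,ū;ā,ū)·r₂(ū) equals
ā² λ₁(ū) λ₂(ū) (λ₂(ū) − λ₁(ū)) ≠ 0, where r₁(u) = (−1,−λ₁(u)), r₂(u) = (1,λ₂(u)). -/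

noncomputable section

def soundSpeed (p : ℝ → ℝ) (ρ : ℝ) : ℝ := Real.sqrt (deriv p ρ)

def lam1 (p : ℝ → ℝ) (u : ℝ × ℝ) : ℝ := u.2 / u.1 - soundSpeed p u.1
def lam2 (p : ℝ → ℝ) (u : ℝ × ℝ) : ℝ := u.2 / u.1 + soundSpeed p u.1

def Pflux (p : ℝ → ℝ) (u : ℝ × ℝ) : ℝ := u.2 ^ 2 / u.1 + p u.1

def subsonicA0 (p : ℝ → ℝ) : Set (ℝ × ℝ) :=
  {u | 0 < u.1 ∧ lam1 p u < 0 ∧ 0 < lam2 p u}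

/-- the junction coupling map Ψ -/
def Psi (p : ℝ → ℝ) (Sgm : ℝ → ℝ → (ℝ × ℝ) → ℝ × ℝ)
    (aL : ℝ) (uL : ℝ × ℝ) (aR : ℝ) (uR : ℝ × ℝ) : ℝ × ℝ :=
  (aR * uR.2 - aL * uL.2, aR * Pflux p uR - aL * Pflux p uL) - Sgm aL aR uL

/-- right eigenvectors -/
def r1 (p : ℝ → ℝ) (u : ℝ × ℝ) : ℝ × ℝ := (-1, -lam1 p u)
def r2 (p : ℝ → ℝ) (u : ℝ × ℝ) : ℝ × ℝ := (1, lam2 p u)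

theorem junction_transversality_det
    (p : ℝ → ℝ)
    (hp_reg : ContDiffOn ℝ 2 p (Set.Ioi 0))
    (hp_pos : ∀ ρ > (0:ℝ), p ρ > 0)
    (hp' : ∀ ρ > (0:ℝ), deriv p ρ > 0)
    (hp'' : ∀ ρ > (0:ℝ), deriv (deriv p) ρ ≥ 0)
    (abar : ℝ) (habar : 0 < abar)
    (ubar : ℝ × ℝ) (hubar : ubar ∈ subsonicA0 p)
    (Sgm : ℝ → ℝ → (ℝ × ℝ) → ℝ × ℝ)
    (hSgm0 : ContDiffAt ℝ 1 (fun x : ℝ × ℝ × (ℝ × ℝ) => Sgm x.1 x.2.1 x.2.2)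
      (abar, abar, ubar))
    (hSgm1 : ∀ᶠ x : ℝ × (ℝ × ℝ) in nhds (abar, ubar), Sgm x.1 x.1 x.2 = 0) :
    (∃ Lm : ℝ × ℝ →L[ℝ] ℝ × ℝ,
        HasFDerivAt (fun uL : ℝ × ℝ => Psi p Sgm abar uL abar ubar) Lm ubar) ∧
    (∃ Lp : ℝ × ℝ →L[ℝ] ℝ × ℝ,
        HasFDerivAt (fun uR : ℝ × ℝ => Psi p Sgm abar ubar abar uR) Lp ubar) ∧
    ∀ Lm Lp : ℝ × ℝ →L[ℝ] ℝ × ℝ,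
      HasFDerivAt (fun uL : ℝ × ℝ => Psi p Sgm abar uL abar ubar) Lm ubar →
      HasFDerivAt (fun uR : ℝ × ℝ => Psi p Sgm abar ubar abar uR) Lp ubar →
        (Lm (r1 p ubar)).1 * (Lp (r2 p ubar)).2
            - (Lp (r2 p ubar)).1 * (Lm (r1 p ubar)).2
          = abar ^ 2 * lam1 p ubar * lam2 p ubar * (lam2 p ubar - lam1 p ubar) ∧
        (Lm (r1 p ubar)).1 * (Lp (r2 p ubar)).2
            - (Lp (r2 p ubar)).1 * (Lm (r1 p ubar)).2 ≠ 0 := by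

  obtain ⟨hρ, hl1, hl2⟩ := hubar
  have hρ' : ubar.1 ≠ 0 := ne_of_gt hρ
  have hP'pos : 0 < deriv p ubar.1 := hp' _ hρ
  -- derivative of p at ubar.1
  have hpd : HasDerivAt p (deriv p ubar.1) ubar.1 :=
    (((hp_reg.contDiffAt (isOpen_Ioi.mem_nhds hρ)).differentiableAt
      (by norm_num)).hasDerivAt)
  set A : ℝ := deriv p ubar.1 - ubar.2 ^ 2 * (ubar.1 ^ 2)⁻¹ with hA
  set B : ℝ := 2 * ubar.2 * ubar.1⁻¹ with hB
  set DP : ℝ × ℝ →L[ℝ] ℝ :=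
    A • ContinuousLinearMap.fst ℝ ℝ ℝ + B • ContinuousLinearMap.snd ℝ ℝ ℝ with hDP
  have hPf : HasFDerivAt (Pflux p) DP ubar := by
    have h1 := ((((hasFDerivAt_snd (𝕜 := ℝ) (p := ubar)).mul
        (hasFDerivAt_snd (𝕜 := ℝ) (p := ubar))).mul
        ((hasDerivAt_inv hρ').comp_hasFDerivAt ubar (hasFDerivAt_fst (𝕜 := ℝ) (p := ubar)))).add
        (hpd.comp_hasFDerivAt ubar (hasFDerivAt_fst (𝕜 := ℝ) (p := ubar))))
    have h2 : Pflux p = fun u : ℝ × ℝ => u.2 * u.2 * u.1⁻¹ + p u.1 := by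
      funext u; simp only [Pflux, div_eq_mul_inv, sq]
    rw [h2]
    refine HasFDerivAt.congr_fderiv h1 (Eq.symm ?_)
    refine ContinuousLinearMap.ext fun v => ?_
    simp [hDP, hA, hB]
    ring
  have hq : HasFDerivAt (fun u : ℝ × ℝ => abar * u.2)
      (abar • ContinuousLinearMap.snd ℝ ℝ ℝ) ubar :=
    (hasFDerivAt_snd (𝕜 := ℝ) (p := ubar)).const_mul abar
  have hPm : HasFDerivAt (fun u : ℝ × ℝ => abar * Pflux p u) (abar • DP) ubar :=
    hPf.const_mul abar
  set Lp0 : ℝ × ℝ →L[ℝ] ℝ × ℝ :=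
    (abar • ContinuousLinearMap.snd ℝ ℝ ℝ).prod (abar • DP) with hLp0
  -- derivative in uR
  have hR : HasFDerivAt (fun uR : ℝ × ℝ => Psi p Sgm abar ubar abar uR) Lp0 ubar := by
    have h := (((hq.sub_const (abar * ubar.2)).prodMk
        (hPm.sub_const (abar * Pflux p ubar))).sub_const (Sgm abar abar ubar))
    exact h
  -- derivative in uL
  have hSgmU : ∀ᶠ u : ℝ × ℝ in nhds ubar, Sgm abar abar u = 0 := by
    have hcont : ContinuousAt (fun u : ℝ × ℝ => ((abar, u) : ℝ × (ℝ × ℝ))) ubar :=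
      continuousAt_const.prodMk continuousAt_id
    exact hcont.tendsto.eventually hSgm1
  have hL : HasFDerivAt (fun uL : ℝ × ℝ => Psi p Sgm abar uL abar ubar) (-Lp0) ubar := by
    have hg : HasFDerivAt (fun uL : ℝ × ℝ =>
        ((abar * ubar.2 - abar * uL.2, abar * Pflux p ubar - abar * Pflux p uL) : ℝ × ℝ))
        (-Lp0) ubar := by
      have h := ((hasFDerivAt_const (abar * ubar.2) ubar).sub hq).prodMk
        ((hasFDerivAt_const (abar * Pflux p ubar) ubar).sub hPm)
      refine HasFDerivAt.congr_fderiv h (Eq.symm ?_)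
      refine ContinuousLinearMap.ext fun v => ?_
      simp [hLp0, Prod.ext_iff]
    refine hg.congr_of_eventuallyEq ?_
    filter_upwards [hSgmU] with u hu
    simp [Psi, hu]
  refine ⟨⟨-Lp0, hL⟩, ⟨Lp0, hR⟩, fun Lm Lp hLm hLp => ?_⟩
  have e1 : Lm = -Lp0 := hLm.unique hL
  have e2 : Lp = Lp0 := hLp.unique hR
  subst e1 e2
  set c := soundSpeed p ubar.1 with hc
  have hc2 : c ^ 2 = deriv p ubar.1 := Real.sq_sqrt hP'pos.le
  have hval1 : lam1 p ubar = ubar.2 / ubar.1 - c := rfl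
  have hval2 : lam2 p ubar = ubar.2 / ubar.1 + c := rfl
  have hdet : ((-Lp0) (r1 p ubar)).1 * (Lp0 (r2 p ubar)).2
      - (Lp0 (r2 p ubar)).1 * ((-Lp0) (r1 p ubar)).2
      = abar ^ 2 * lam1 p ubar * lam2 p ubar * (lam2 p ubar - lam1 p ubar) := by
    have hAval : A = c ^ 2 - ubar.2 ^ 2 * (ubar.1 ^ 2)⁻¹ := by rw [hc2]
    simp only [hLp0, hDP, ContinuousLinearMap.neg_apply, ContinuousLinearMap.prod_apply,
      ContinuousLinearMap.smul_apply, ContinuousLinearMap.add_apply,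
      ContinuousLinearMap.coe_fst', ContinuousLinearMap.coe_snd', r1, r2,
      hval1, hval2, hAval, hB, smul_eq_mul, Prod.fst_neg, Prod.snd_neg]
    field_simp
    ring
  refine ⟨hdet, ?_⟩
  rw [hdet]
  have h1 : abar ^ 2 * lam1 p ubar < 0 := mul_neg_of_pos_of_neg (pow_pos habar 2) hl1
  have h2 : abar ^ 2 * lam1 p ubar * lam2 p ubar < 0 := mul_neg_of_neg_of_pos h1 hl2
  have h3 : (0:ℝ) < lam2 p ubar - lam1 p ubar := by linarith
  exact ne_of_lt (mul_neg_of_neg_of_pos h2 h3)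


end
end

section
/- (Lemma 2.1) Let p satisfy (P), fix ā > 0, Δ ∈ (0,ā), δ > 0 and ū ∈ A₀. Let Σ ∈ C¹([ā−Δ,ā+Δ]² × B(ū;δ); ℝ²) satisfy Σ(a,a;u) = 0 for all a ∈ [ā−Δ,ā+Δ] and u ∈ B(ū;δ). Then there exist δ̄ > 0 and a Lipschitz continuous map T : (ā−δ̄,ā+δ̄) × (ā−δ̄,ā+δ̄) × B(ū;δ̄) → A₀ such that for all a⁻, a⁺ ∈ (ā−δ̄,ā+δ̄) and u⁻, u⁺ ∈ B(ū;δ̄): Ψ(a⁻,u⁻;a⁺,u⁺) = 0 if and only if u⁺ = T(a⁻,a⁺;u⁻). In particular T(ā,ā;ū) = ū. -/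
/- STATEMENT 3 (Lemma 2.1): Let p satisfy (P), fix ā > 0, Δ ∈ (0,ā), δ > 0 and
ū ∈ A₀. Let Σ ∈ C¹([ā−Δ,ā+Δ]² × B(ū;δ); ℝ²) with Σ(a,a;u) = 0 there. Then there
exist δ̄ > 0 and a Lipschitz map T : (ā−δ̄,ā+δ̄)² × B(ū;δ̄) → A₀ such that for all
a⁻,a⁺ ∈ (ā−δ̄,ā+δ̄) and u⁻,u⁺ ∈ B(ū;δ̄): Ψ(a⁻,u⁻;a⁺,u⁺) = 0 ↔ u⁺ = T(a⁻,a⁺;u⁻).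
In particular T(ā,ā;ū) = ū. -/

noncomputable section

open Set Metric

lemma aux_Pflux_strict (p : ℝ → ℝ) (ubar : ℝ × ℝ)
    (hpd : HasStrictDerivAt p (deriv p ubar.1) ubar.1) (hρ : 0 < ubar.1) :
    HasStrictFDerivAt (Pflux p)
      ((deriv p ubar.1 - ubar.2 ^ 2 / ubar.1 ^ 2) • ContinuousLinearMap.fst ℝ ℝ ℝ
        + (2 * ubar.2 / ubar.1) • ContinuousLinearMap.snd ℝ ℝ ℝ) ubar := by
  have hfst : HasStrictFDerivAt (fun u : ℝ × ℝ => u.1) (ContinuousLinearMap.fst ℝ ℝ ℝ) ubar :=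
    (ContinuousLinearMap.fst ℝ ℝ ℝ).hasStrictFDerivAt
  have hsnd : HasStrictFDerivAt (fun u : ℝ × ℝ => u.2) (ContinuousLinearMap.snd ℝ ℝ ℝ) ubar :=
    (ContinuousLinearMap.snd ℝ ℝ ℝ).hasStrictFDerivAt
  have hq2 := hsnd.mul hsnd
  have hi : HasStrictFDerivAt (fun u : ℝ × ℝ => u.1⁻¹)
      ((-(ubar.1 ^ 2)⁻¹) • ContinuousLinearMap.fst ℝ ℝ ℝ) ubar :=
    (hasStrictDerivAt_inv hρ.ne').comp_hasStrictFDerivAt ubar hfst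
  have hpc : HasStrictFDerivAt (fun u : ℝ × ℝ => p u.1)
      ((deriv p ubar.1) • ContinuousLinearMap.fst ℝ ℝ ℝ) ubar :=
    hpd.comp_hasStrictFDerivAt ubar hfst
  have hsum := (hq2.mul hi).add hpc
  have heq : (Pflux p) = fun u : ℝ × ℝ => (u.2 * u.2) * u.1⁻¹ + p u.1 := by
    funext u; simp [Pflux, div_eq_mul_inv, pow_two]
  rw [heq]
  refine hsum.congr_fderiv ?_
  apply ContinuousLinearMap.ext
  rintro ⟨x, y⟩
  simp only [ContinuousLinearMap.add_apply, ContinuousLinearMap.smul_apply,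
    ContinuousLinearMap.coe_fst', ContinuousLinearMap.coe_snd', smul_eq_mul, Pi.mul_apply]
  field_simp
  ring

section derivstuff

variable (p : ℝ → ℝ) (Sgm : ℝ → ℝ → (ℝ × ℝ) → ℝ × ℝ)

/-- the big map -/
def bigG (z : (ℝ × ℝ × (ℝ × ℝ)) × (ℝ × ℝ)) : (ℝ × ℝ × (ℝ × ℝ)) × (ℝ × ℝ) :=
  (z.1, Psi p Sgm z.1.1 z.1.2.2 z.1.2.1 z.2)

lemma bigG_eq (z : (ℝ × ℝ × (ℝ × ℝ)) × (ℝ × ℝ)) :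
    bigG p Sgm z = (z.1, z.1.2.1 • (z.2.2, Pflux p z.2)
      - (z.1.1 • ((z.1.2.2).2, Pflux p z.1.2.2) + Sgm z.1.1 z.1.2.1 z.1.2.2)) := by
  cases' hs : (Sgm z.1.1 z.1.2.1 z.1.2.2) with s1 s2
  simp only [bigG, Psi, hs, Prod.smul_mk, smul_eq_mul, Prod.mk_add_mk, Prod.mk_sub_mk,
    Prod.ext_iff]
  exact ⟨trivial, by ring, by ring⟩

end derivstuff

-- A0 nbhd
lemma aux_A0_nhds (p : ℝ → ℝ) (hp_reg : ContDiffOn ℝ 2 p (Set.Ioi 0))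
    (ubar : ℝ × ℝ) (hubar : ubar ∈ subsonicA0 p) :
    subsonicA0 p ∈ nhds ubar := by
  obtain ⟨hρ, hl1, hl2⟩ := hubar
  have hderiv : ContinuousOn (deriv p) (Set.Ioi 0) :=
    hp_reg.continuousOn_deriv_of_isOpen isOpen_Ioi (by norm_num)
  have hderivAt : ContinuousAt (deriv p) ubar.1 :=
    hderiv.continuousAt (Ioi_mem_nhds hρ)
  have hss : ContinuousAt (fun u : ℝ × ℝ => soundSpeed p u.1) ubar := by
    exact Real.continuous_sqrt.continuousAt.comp (hderivAt.comp continuousAt_fst)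
  have hdivc : ContinuousAt (fun u : ℝ × ℝ => u.2 / u.1) ubar :=
    continuousAt_snd.div continuousAt_fst hρ.ne'
  have h1 : ContinuousAt (lam1 p) ubar := hdivc.sub hss
  have h2 : ContinuousAt (lam2 p) ubar := hdivc.add hss
  have m1 : {u : ℝ × ℝ | 0 < u.1} ∈ nhds ubar :=
    (isOpen_lt continuous_const continuous_fst).mem_nhds hρ
  have m2 : lam1 p ⁻¹' Set.Iio 0 ∈ nhds ubar := h1.preimage_mem_nhds (Iio_mem_nhds hl1)
  have m3 : lam2 p ⁻¹' Set.Ioi 0 ∈ nhds ubar := h2.preimage_mem_nhds (Ioi_mem_nhds hl2)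
  filter_upwards [m1, m2, m3] with u hu1 hu2 hu3
  exact ⟨hu1, hu2, hu3⟩

def Mmat (α β : ℝ) : (ℝ × ℝ) →L[ℝ] (ℝ × ℝ) :=
  (ContinuousLinearMap.snd ℝ ℝ ℝ).prod
    (α • ContinuousLinearMap.fst ℝ ℝ ℝ + β • ContinuousLinearMap.snd ℝ ℝ ℝ)

lemma bigG_deriv (p : ℝ → ℝ) (Sgm : ℝ → ℝ → (ℝ × ℝ) → ℝ × ℝ)
    (ubar : ℝ × ℝ) (abar α β : ℝ)
    (hΦ : HasStrictFDerivAt (fun u : ℝ × ℝ => ((u.2, Pflux p u) : ℝ × ℝ)) (Mmat α β) ubar)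
    (AS : (ℝ × ℝ × (ℝ × ℝ)) →L[ℝ] (ℝ × ℝ))
    (hSgmS : HasStrictFDerivAt (fun w : ℝ × ℝ × (ℝ × ℝ) => Sgm w.1 w.2.1 w.2.2) AS
      (abar, abar, ubar)) :
    ∃ D : ((ℝ × ℝ × (ℝ × ℝ)) × (ℝ × ℝ)) →L[ℝ] ((ℝ × ℝ × (ℝ × ℝ)) × (ℝ × ℝ)),
      HasStrictFDerivAt (bigG p Sgm) D ((abar, abar, ubar), ubar) ∧
      (∀ dz, (D dz).1 = dz.1) ∧
      (∀ dv : ℝ × ℝ, (D (0, dv)).2 = abar • Mmat α β dv) := by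
  classical
  set zbar : (ℝ × ℝ × (ℝ × ℝ)) × (ℝ × ℝ) := ((abar, abar, ubar), ubar) with hzbar
  let fstW : ((ℝ × ℝ × (ℝ × ℝ)) × (ℝ × ℝ)) →L[ℝ] (ℝ × ℝ × (ℝ × ℝ)) :=
    ContinuousLinearMap.fst ℝ _ _
  let sndW : ((ℝ × ℝ × (ℝ × ℝ)) × (ℝ × ℝ)) →L[ℝ] (ℝ × ℝ) :=
    ContinuousLinearMap.snd ℝ _ _
  let cC : ((ℝ × ℝ × (ℝ × ℝ)) × (ℝ × ℝ)) →L[ℝ] ℝ :=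
    (ContinuousLinearMap.fst ℝ ℝ (ℝ × ℝ)).comp
      ((ContinuousLinearMap.snd ℝ ℝ (ℝ × (ℝ × ℝ))).comp fstW)
  have hc : HasStrictFDerivAt (fun z : (ℝ × ℝ × (ℝ × ℝ)) × (ℝ × ℝ) => z.1.2.1) cC zbar :=
    cC.hasStrictFDerivAt
  have hΦR : HasStrictFDerivAt
      (fun z : (ℝ × ℝ × (ℝ × ℝ)) × (ℝ × ℝ) => ((z.2.2, Pflux p z.2) : ℝ × ℝ))
      ((Mmat α β).comp sndW) zbar := hΦ.comp zbar sndW.hasStrictFDerivAt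
  have hA := hc.smul hΦR
  let fstWc : (ℝ × ℝ × (ℝ × ℝ)) →L[ℝ] ℝ := ContinuousLinearMap.fst ℝ ℝ (ℝ × (ℝ × ℝ))
  let sndsnd : (ℝ × ℝ × (ℝ × ℝ)) →L[ℝ] (ℝ × ℝ) :=
    (ContinuousLinearMap.snd ℝ ℝ (ℝ × ℝ)).comp (ContinuousLinearMap.snd ℝ ℝ (ℝ × (ℝ × ℝ)))
  have hΦL : HasStrictFDerivAt
      (fun w : ℝ × ℝ × (ℝ × ℝ) => (((w.2.2).2, Pflux p w.2.2) : ℝ × ℝ))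
      ((Mmat α β).comp sndsnd) (abar, abar, ubar) :=
    HasStrictFDerivAt.comp (abar, abar, ubar) hΦ sndsnd.hasStrictFDerivAt
  have hh := (fstWc.hasStrictFDerivAt.smul hΦL).add hSgmS
  have hB := hh.comp zbar fstW.hasStrictFDerivAt
  have hF := hA.sub hB
  have hGs := HasStrictFDerivAt.prodMk fstW.hasStrictFDerivAt hF
  have hfun : (bigG p Sgm) = fun z : (ℝ × ℝ × (ℝ × ℝ)) × (ℝ × ℝ) =>
      ((z.1, z.1.2.1 • ((z.2.2, Pflux p z.2) : ℝ × ℝ)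
        - (z.1.1 • (((z.1.2.2).2, Pflux p z.1.2.2) : ℝ × ℝ)
            + Sgm z.1.1 z.1.2.1 z.1.2.2)) : (ℝ × ℝ × (ℝ × ℝ)) × (ℝ × ℝ)) :=
    funext (bigG_eq p Sgm)
  refine ⟨_, by rw [hfun]; exact hGs, ?_, ?_⟩
  · intro dz
    simp [fstW, ContinuousLinearMap.prod_apply]
  · intro dv
    simp [ContinuousLinearMap.prod_apply, ContinuousLinearMap.sub_apply,
      ContinuousLinearMap.add_apply, ContinuousLinearMap.smul_apply,
      ContinuousLinearMap.comp_apply, ContinuousLinearMap.smulRight_apply, fstW, sndW, cC,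
      fstWc, sndsnd, hzbar]

theorem stationary_solution_map_T
    (p : ℝ → ℝ)
    (hp_reg : ContDiffOn ℝ 2 p (Set.Ioi 0))
    (hp_pos : ∀ ρ > (0:ℝ), p ρ > 0)
    (hp' : ∀ ρ > (0:ℝ), deriv p ρ > 0)
    (hp'' : ∀ ρ > (0:ℝ), deriv (deriv p) ρ ≥ 0)
    (abar Δ δ : ℝ) (habar : 0 < abar) (hΔ : 0 < Δ) (hΔa : Δ < abar) (hδ : 0 < δ)
    (ubar : ℝ × ℝ) (hubar : ubar ∈ subsonicA0 p)
    (Sgm : ℝ → ℝ → (ℝ × ℝ) → ℝ × ℝ)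
    (hSgm0 : ContDiffOn ℝ 1 (fun x : ℝ × ℝ × (ℝ × ℝ) => Sgm x.1 x.2.1 x.2.2)
      (Icc (abar - Δ) (abar + Δ) ×ˢ Icc (abar - Δ) (abar + Δ) ×ˢ ball ubar δ))
    (hSgm1 : ∀ a ∈ Icc (abar - Δ) (abar + Δ), ∀ u ∈ ball ubar δ, Sgm a a u = 0) :
    ∃ δbar > 0, ∃ T : ℝ → ℝ → (ℝ × ℝ) → ℝ × ℝ,
      (∃ K : NNReal, LipschitzOnWith K
          (fun x : ℝ × ℝ × (ℝ × ℝ) => T x.1 x.2.1 x.2.2)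
          (Ioo (abar - δbar) (abar + δbar) ×ˢ Ioo (abar - δbar) (abar + δbar) ×ˢ
            ball ubar δbar)) ∧
      (∀ aL ∈ Ioo (abar - δbar) (abar + δbar), ∀ aR ∈ Ioo (abar - δbar) (abar + δbar),
        ∀ uL ∈ ball ubar δbar, T aL aR uL ∈ subsonicA0 p) ∧
      (∀ aL ∈ Ioo (abar - δbar) (abar + δbar), ∀ aR ∈ Ioo (abar - δbar) (abar + δbar),
        ∀ uL ∈ ball ubar δbar, ∀ uR ∈ ball ubar δbar,
          (Psi p Sgm aL uL aR uR = 0 ↔ uR = T aL aR uL)) ∧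
      T abar abar ubar = ubar := by
  classical
  obtain ⟨hρ, hl1, hl2⟩ := hubar
  -- sound speed facts
  have hp'pos : 0 < deriv p ubar.1 := hp' ubar.1 hρ
  set α : ℝ := deriv p ubar.1 - ubar.2 ^ 2 / ubar.1 ^ 2 with hαdef
  set β : ℝ := 2 * ubar.2 / ubar.1 with hβdef
  have hsq : Real.sqrt (deriv p ubar.1) ^ 2 = deriv p ubar.1 := Real.sq_sqrt hp'pos.le
  have hl1' : ubar.2 / ubar.1 < Real.sqrt (deriv p ubar.1) := by
    have := hl1; simp only [lam1, soundSpeed] at this; linarith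
  have hl2' : -Real.sqrt (deriv p ubar.1) < ubar.2 / ubar.1 := by
    have := hl2; simp only [lam2, soundSpeed] at this; linarith
  have hα : 0 < α := by
    have h2 : (ubar.2 / ubar.1) ^ 2 < deriv p ubar.1 := by
      rw [← hsq]; exact sq_lt_sq' hl2' hl1'
    rw [div_pow] at h2
    rw [hαdef]; linarith
  -- strict derivative of p
  have hpat : ContDiffAt ℝ 2 p ubar.1 := hp_reg.contDiffAt (Ioi_mem_nhds hρ)
  have hpd : HasStrictDerivAt p (deriv p ubar.1) ubar.1 :=
    hpat.hasStrictDerivAt (by norm_num)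
  have hΦ : HasStrictFDerivAt (fun u : ℝ × ℝ => ((u.2, Pflux p u) : ℝ × ℝ)) (Mmat α β) ubar :=
    HasStrictFDerivAt.prodMk (ContinuousLinearMap.snd ℝ ℝ ℝ).hasStrictFDerivAt (aux_Pflux_strict p ubar hpd hρ)
  -- strict derivative of Sigma
  have habarIcc : abar ∈ Icc (abar - Δ) (abar + Δ) := ⟨by linarith, by linarith⟩
  have hSgmAt : ContDiffAt ℝ 1 (fun w : ℝ × ℝ × (ℝ × ℝ) => Sgm w.1 w.2.1 w.2.2)
      (abar, abar, ubar) :=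
    hSgm0.contDiffAt (prod_mem_nhds (Icc_mem_nhds (by linarith) (by linarith))
      (prod_mem_nhds (Icc_mem_nhds (by linarith) (by linarith)) (ball_mem_nhds _ hδ)))
  have hSgmS := hSgmAt.hasStrictFDerivAt one_ne_zero
  -- derivative of big map
  obtain ⟨D, hGs, hD1, hD2⟩ := bigG_deriv p Sgm ubar abar α β hΦ _ hSgmS
  -- injectivity of M
  have hMinj : ∀ v : ℝ × ℝ, Mmat α β v = 0 → v = 0 := by
    rintro ⟨x, y⟩ hv
    simp only [Mmat, ContinuousLinearMap.prod_apply, ContinuousLinearMap.add_apply,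
      ContinuousLinearMap.smul_apply, ContinuousLinearMap.coe_fst',
      ContinuousLinearMap.coe_snd', smul_eq_mul, Prod.mk_eq_zero] at hv
    obtain ⟨h1, h2⟩ := hv
    have : x = 0 := by
      rw [h1] at h2; simp at h2
      rcases h2 with h | h
      · exact absurd h hα.ne'
      · exact h
    exact Prod.ext this h1
  -- injectivity of D
  have hker : ∀ z, D z = 0 → z = 0 := by
    intro z hz
    have h1 : z.1 = 0 := by rw [← hD1 z, hz]; rfl
    have hz' : z = ((0 : ℝ × ℝ × (ℝ × ℝ)), z.2) := Prod.ext h1 rfl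
    rw [hz'] at hz
    have h2 := hD2 z.2
    rw [hz] at h2
    have h3 : Mmat α β z.2 = 0 := by
      rcases smul_eq_zero.mp h2.symm with h | h
      · exact absurd h habar.ne'
      · exact h
    have h4 := hMinj z.2 h3
    rw [hz', h4]; rfl
  have hDinj : Function.Injective D := by
    intro x y hxy
    have := hker (x - y) (by rw [map_sub, hxy, sub_self])
    exact sub_eq_zero.mp this
  have hDbij : Function.Bijective D :=
    ⟨hDinj, (LinearMap.injective_iff_surjective
      (f := (D : ((ℝ × ℝ × (ℝ × ℝ)) × (ℝ × ℝ)) →ₗ[ℝ] ((ℝ × ℝ × (ℝ × ℝ)) × (ℝ × ℝ))))).mp hDinj⟩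
  let E : (((ℝ × ℝ × (ℝ × ℝ)) × (ℝ × ℝ)) ≃L[ℝ] ((ℝ × ℝ × (ℝ × ℝ)) × (ℝ × ℝ))) :=
    (LinearEquiv.ofBijective
      (D : ((ℝ × ℝ × (ℝ × ℝ)) × (ℝ × ℝ)) →ₗ[ℝ] ((ℝ × ℝ × (ℝ × ℝ)) × (ℝ × ℝ)))
      hDbij).toContinuousLinearEquiv
  have hED : (E : ((ℝ × ℝ × (ℝ × ℝ)) × (ℝ × ℝ)) →L[ℝ] ((ℝ × ℝ × (ℝ × ℝ)) × (ℝ × ℝ))) = D :=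
    ContinuousLinearMap.ext fun z => rfl
  have hG' : HasStrictFDerivAt (bigG p Sgm)
      (E : ((ℝ × ℝ × (ℝ × ℝ)) × (ℝ × ℝ)) →L[ℝ] ((ℝ × ℝ × (ℝ × ℝ)) × (ℝ × ℝ)))
      ((abar, abar, ubar), ubar) := by rw [hED]; exact hGs
  set Φh := HasStrictFDerivAt.toOpenPartialHomeomorph (bigG p Sgm) hG' with hΦhdef
  have hcoe : ⇑Φh = bigG p Sgm := HasStrictFDerivAt.toOpenPartialHomeomorph_coe hG'
  have hzsource : ((abar, abar, ubar), ubar) ∈ Φh.source :=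
    HasStrictFDerivAt.mem_toOpenPartialHomeomorph_source hG'
  have hG0 : bigG p Sgm ((abar, abar, ubar), ubar) = ((abar, abar, ubar), 0) := by
    have h0 := hSgm1 abar habarIcc ubar (mem_ball_self hδ)
    simp [bigG, Psi, h0]
  have htarget : (((abar, abar, ubar) : ℝ × ℝ × (ℝ × ℝ)), (0 : ℝ × ℝ)) ∈ Φh.target := by
    rw [← hG0]; exact HasStrictFDerivAt.image_mem_toOpenPartialHomeomorph_target hG'
  have hsymm := HasStrictFDerivAt.to_localInverse hG'
  rw [HasStrictFDerivAt.localInverse_def hG', hG0] at hsymm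
  obtain ⟨K, s, hs, hK⟩ := HasStrictFDerivAt.exists_lipschitzOnWith hsymm
  have hK' := lipschitzOnWith_iff_dist_le_mul.mp hK
  -- radii
  obtain ⟨r₀, hr₀pos, hr₀⟩ := Metric.mem_nhds_iff.mp (Φh.open_source.mem_nhds hzsource)
  obtain ⟨r₁, hr₁pos, hr₁⟩ := Metric.mem_nhds_iff.mp
    (Filter.inter_mem (Φh.open_target.mem_nhds htarget) hs)
  obtain ⟨r₂, hr₂pos, hr₂⟩ := Metric.mem_nhds_iff.mp
    (aux_A0_nhds p hp_reg ubar ⟨hρ, hl1, hl2⟩)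
  set k : ℝ := (K : ℝ) with hkdef
  have hk0 : 0 ≤ k := K.coe_nonneg
  set δbar : ℝ := min (min r₀ r₁) (r₂ / (k + 1)) with hδbardef
  have hδbarpos : 0 < δbar := by
    refine lt_min (lt_min hr₀pos hr₁pos) (by positivity)
  have hδbar_r₀ : δbar ≤ r₀ := le_trans (min_le_left _ _) (min_le_left _ _)
  have hδbar_r₁ : δbar ≤ r₁ := le_trans (min_le_left _ _) (min_le_right _ _)
  have hδbar_r₂ : k * δbar < r₂ := by
    have h1 : δbar ≤ r₂ / (k + 1) := min_le_right _ _
    have h2 : k * δbar ≤ k * (r₂ / (k + 1)) := by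
      exact mul_le_mul_of_nonneg_left h1 hk0
    have h3 : k * (r₂ / (k + 1)) = r₂ * (k / (k + 1)) := by ring
    have h4 : k / (k + 1) < 1 := (div_lt_one (by linarith)).mpr (by linarith)
    have h5 : r₂ * (k / (k + 1)) < r₂ * 1 := by
      apply mul_lt_mul_of_pos_left h4 hr₂pos
    nlinarith
  -- distance helpers
  have hdist0 : ∀ w w' : ℝ × ℝ × (ℝ × ℝ),
      dist ((w, (0 : ℝ × ℝ)) : (ℝ × ℝ × (ℝ × ℝ)) × (ℝ × ℝ)) ((w', 0)) = dist w w' := by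
    intro w w'
    rw [Prod.dist_eq]
    simp [max_eq_left dist_nonneg]
  have hwdist : ∀ {aL aR : ℝ} {uL : ℝ × ℝ}, aL ∈ Ioo (abar - δbar) (abar + δbar) →
      aR ∈ Ioo (abar - δbar) (abar + δbar) → uL ∈ ball ubar δbar →
      dist ((aL, aR, uL) : ℝ × ℝ × (ℝ × ℝ)) ((abar, abar, ubar)) < δbar := by
    intro aL aR uL h1 h2 h3
    rw [Prod.dist_eq, Prod.dist_eq]
    refine max_lt ?_ (max_lt ?_ (mem_ball.mp h3))
    · rw [Real.dist_eq, abs_sub_lt_iff]; exact ⟨by linarith [h1.1, h1.2], by linarith [h1.1, h1.2]⟩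
    · rw [Real.dist_eq, abs_sub_lt_iff]; exact ⟨by linarith [h2.1, h2.2], by linarith [h2.1, h2.2]⟩
  -- base point inverse
  have hbase : Φh.symm (((abar, abar, ubar) : ℝ × ℝ × (ℝ × ℝ)), (0 : ℝ × ℝ))
      = ((abar, abar, ubar), ubar) := by
    have h := Φh.left_inv hzsource
    rw [hcoe, hG0] at h
    exact h
  -- membership in s of shifted points
  have hsmem : ∀ {w : ℝ × ℝ × (ℝ × ℝ)}, dist w ((abar, abar, ubar) : ℝ × ℝ × (ℝ × ℝ)) < δbar →
      ((w, (0 : ℝ × ℝ)) : (ℝ × ℝ × (ℝ × ℝ)) × (ℝ × ℝ)) ∈ Φh.target ∩ s := by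
    intro w hw
    apply hr₁
    rw [mem_ball, hdist0]
    exact lt_of_lt_of_le hw hδbar_r₁
  have hbars : (((abar, abar, ubar) : ℝ × ℝ × (ℝ × ℝ)), (0 : ℝ × ℝ)) ∈ Φh.target ∩ s :=
    hsmem (by simpa using hδbarpos)
  -- the map T
  refine ⟨δbar, hδbarpos, fun aL aR uL => (Φh.symm ((aL, aR, uL), 0)).2, ⟨K, ?_⟩, ?_, ?_, ?_⟩
  · -- Lipschitz
    rw [lipschitzOnWith_iff_dist_le_mul]
    rintro ⟨x1, x2, x3⟩ hx ⟨y1, y2, y3⟩ hy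
    have hxd := hwdist hx.1 hx.2.1 hx.2.2
    have hyd := hwdist hy.1 hy.2.1 hy.2.2
    have hxs := hsmem hxd
    have hys := hsmem hyd
    calc dist (Φh.symm ((x1, x2, x3), 0)).2 (Φh.symm ((y1, y2, y3), 0)).2
        ≤ dist (Φh.symm ((x1, x2, x3), 0)) (Φh.symm ((y1, y2, y3), 0)) := by
          rw [Prod.dist_eq]; exact le_max_right _ _
      _ ≤ K * dist (((x1, x2, x3), (0 : ℝ × ℝ)) : (ℝ × ℝ × (ℝ × ℝ)) × (ℝ × ℝ))
            ((y1, y2, y3), 0) := hK' _ hxs.2 _ hys.2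
      _ = K * dist ((x1, x2, x3) : ℝ × ℝ × (ℝ × ℝ)) ((y1, y2, y3) : ℝ × ℝ × (ℝ × ℝ)) := by
          rw [hdist0]
      _ = K * dist (((x1, x2, x3)) : ℝ × ℝ × (ℝ × ℝ)) (((y1, y2, y3)) : ℝ × ℝ × (ℝ × ℝ)) := rfl
  · -- maps into A0
    intro aL hL aR hR uL huL
    have hwd := hwdist hL hR huL
    have hws := hsmem hwd
    apply hr₂
    rw [mem_ball]
    have h1 : dist (Φh.symm ((aL, aR, uL), 0)).2 ubar
        ≤ dist (Φh.symm ((aL, aR, uL), 0)) (Φh.symm ((abar, abar, ubar), 0)) := by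
      rw [hbase, Prod.dist_eq]
      exact le_max_right _ _
    have h2 := hK' _ hws.2 _ hbars.2
    rw [hdist0] at h2
    have h3 : (K : ℝ) * dist ((aL, aR, uL) : ℝ × ℝ × (ℝ × ℝ)) ((abar, abar, ubar))
        ≤ k * δbar := mul_le_mul_of_nonneg_left hwd.le hk0
    calc dist (Φh.symm ((aL, aR, uL), 0)).2 ubar ≤ _ := h1
      _ ≤ (K : ℝ) * dist ((aL, aR, uL) : ℝ × ℝ × (ℝ × ℝ)) ((abar, abar, ubar)) := h2
      _ ≤ k * δbar := h3
      _ < r₂ := hδbar_r₂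
  · -- the characterization
    intro aL hL aR hR uL huL uR huR
    have hwd := hwdist hL hR huL
    have hws := hsmem hwd
    have htarg : (((aL, aR, uL) : ℝ × ℝ × (ℝ × ℝ)), (0 : ℝ × ℝ)) ∈ Φh.target := hws.1
    have hz'source : Φh.symm ((aL, aR, uL), 0) ∈ Φh.source := Φh.map_target htarg
    have hright := Φh.right_inv htarg
    rw [hcoe] at hright
    have h1 : (Φh.symm (((aL, aR, uL) : ℝ × ℝ × (ℝ × ℝ)), (0 : ℝ × ℝ))).1 = (aL, aR, uL) :=
      congrArg Prod.fst hright
    constructor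
    · intro hpsi
      have hz''source : (((aL, aR, uL) : ℝ × ℝ × (ℝ × ℝ)), uR) ∈ Φh.source := by
        apply hr₀
        rw [mem_ball, Prod.dist_eq]
        exact lt_of_lt_of_le (max_lt hwd (mem_ball.mp huR)) hδbar_r₀
      have hlhs : Φh (((aL, aR, uL) : ℝ × ℝ × (ℝ × ℝ)), uR) = ((aL, aR, uL), (0 : ℝ × ℝ)) := by
        rw [hcoe]
        show ((aL, aR, uL), Psi p Sgm aL uL aR uR) = _
        rw [hpsi]
      have heq : Φh (((aL, aR, uL) : ℝ × ℝ × (ℝ × ℝ)), uR)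
          = Φh (Φh.symm ((aL, aR, uL), 0)) :=
        hlhs.trans (Φh.right_inv htarg).symm
      have := Φh.injOn hz''source hz'source heq
      exact congrArg Prod.snd this
    · intro hT
      have h2 : Psi p Sgm (Φh.symm (((aL, aR, uL) : ℝ × ℝ × (ℝ × ℝ)), (0 : ℝ × ℝ))).1.1
          (Φh.symm (((aL, aR, uL) : ℝ × ℝ × (ℝ × ℝ)), (0 : ℝ × ℝ))).1.2.2
          (Φh.symm (((aL, aR, uL) : ℝ × ℝ × (ℝ × ℝ)), (0 : ℝ × ℝ))).1.2.1
          (Φh.symm (((aL, aR, uL) : ℝ × ℝ × (ℝ × ℝ)), (0 : ℝ × ℝ))).2 = 0 :=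
        congrArg Prod.snd hright
      rw [h1] at h2
      rw [hT]
      exact h2
  · -- base point
    exact congrArg Prod.snd hbase

end
end

section
/- Fix ξ ∈ (0,1) and set η = 1/(1−ξ²). Define, for θ in a neighborhood of 0, f(θ) = 1 + θ(η/2 − 1) + (θ/(1+θ)) · (1 − (1/2)/(1 − ξ²(1−θ)²/(1+ηθ)²)). Then f(0) = 1 and (f(θ) − 1)/θ² → 𝒦(ξ) as θ → 0, where 𝒦(ξ) = (−1 + 8ξ² − 7ξ⁴ + 2ξ⁶)/(2(1−ξ)³(1+ξ)³); equivalently, f(θ) = 1 + 𝒦(ξ)θ² + o(θ²). -/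
/- STATEMENT 16: Fix ξ ∈ (0,1), set η = 1/(1−ξ²), and for θ near 0 let
f(θ) = 1 + θ(η/2 − 1) + (θ/(1+θ))·(1 − (1/2)/(1 − ξ²(1−θ)²/(1+ηθ)²)).
Then f(0) = 1 and (f(θ) − 1)/θ² → 𝒦(ξ) as θ → 0, where
𝒦(ξ) = (−1 + 8ξ² − 7ξ⁴ + 2ξ⁶)/(2(1−ξ)³(1+ξ)³). -/

open Filter

set_option maxHeartbeats 2000000 in
theorem two_junction_amplification_expansion (ξ : ℝ) (hξ : ξ ∈ Set.Ioo (0:ℝ) 1) :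
    (fun θ : ℝ => 1 + θ * ((1 / (1 - ξ ^ 2)) / 2 - 1)
        + θ / (1 + θ) * (1 - (1 / 2) /
            (1 - ξ ^ 2 * (1 - θ) ^ 2 / (1 + (1 / (1 - ξ ^ 2)) * θ) ^ 2))) 0 = 1 ∧
    Tendsto
      (fun θ : ℝ =>
        ((1 + θ * ((1 / (1 - ξ ^ 2)) / 2 - 1)
          + θ / (1 + θ) * (1 - (1 / 2) /
              (1 - ξ ^ 2 * (1 - θ) ^ 2 / (1 + (1 / (1 - ξ ^ 2)) * θ) ^ 2))) - 1)
          / θ ^ 2)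
      (nhdsWithin 0 {(0:ℝ)}ᶜ)
      (nhds ((-1 + 8 * ξ ^ 2 - 7 * ξ ^ 4 + 2 * ξ ^ 6)
        / (2 * (1 - ξ) ^ 3 * (1 + ξ) ^ 3))) := by
  obtain ⟨hξ0, hξ1⟩ := hξ
  have he : (0:ℝ) < 1 - ξ ^ 2 := by nlinarith
  have he' : (1:ℝ) - ξ ^ 2 ≠ 0 := ne_of_gt he
  constructor
  · norm_num
  · set η : ℝ := 1 / (1 - ξ ^ 2) with hη
    set Q : ℝ → ℝ := fun θ => (1 + η * θ) ^ 2 - ξ ^ 2 * (1 - θ) ^ 2 with hQdef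
    set P : ℝ → ℝ := fun θ =>
      (η * (2 * (η + ξ ^ 2)) + (η - 2) * (1 - ξ ^ 2) - 2 * η)
      + (η * (η ^ 2 - ξ ^ 2) + (η - 2) * (2 * (η + ξ ^ 2)) - η ^ 2) * θ
      + ((η - 2) * (η ^ 2 - ξ ^ 2)) * θ ^ 2 with hPdef
    have hQ0 : Q 0 = 1 - ξ ^ 2 := by simp [hQdef]
    have hDen0 : 2 * Q 0 * (1 + 0) ≠ 0 := by
      rw [hQ0]; norm_num [he']
    have hcont : Tendsto (fun θ => P θ / (2 * Q θ * (1 + θ))) (nhdsWithin 0 {(0:ℝ)}ᶜ)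
        (nhds (P 0 / (2 * Q 0 * (1 + 0)))) := by
      apply Tendsto.mono_left _ nhdsWithin_le_nhds
      apply ContinuousAt.tendsto
      apply ContinuousAt.div
      · fun_prop
      · fun_prop
      · exact hDen0
    have hval : P 0 / (2 * Q 0 * (1 + 0)) =
        (-1 + 8 * ξ ^ 2 - 7 * ξ ^ 4 + 2 * ξ ^ 6) / (2 * (1 - ξ) ^ 3 * (1 + ξ) ^ 3) := by
      have h1 : (1:ℝ) - ξ ≠ 0 := by nlinarith
      have h2 : (1:ℝ) + ξ ≠ 0 := by nlinarith
      simp only [hPdef, hQ0, hη]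
      field_simp
      ring
    rw [hval] at hcont
    refine Tendsto.congr' ?_ hcont
    have hne1 : ∀ᶠ θ : ℝ in nhds 0, (1:ℝ) + θ ≠ 0 := by
      have : ContinuousAt (fun θ : ℝ => 1 + θ) 0 := by fun_prop
      exact this.eventually_ne (by norm_num)
    have hne2 : ∀ᶠ θ : ℝ in nhds 0, (1:ℝ) + η * θ ≠ 0 := by
      have : ContinuousAt (fun θ : ℝ => 1 + η * θ) 0 := by fun_prop
      exact this.eventually_ne (by norm_num)
    have hneQ : ∀ᶠ θ : ℝ in nhds 0, Q θ ≠ 0 := by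
      have hc : ContinuousAt Q 0 := by rw [hQdef]; fun_prop
      have := hc.eventually_ne (by rw [hQ0]; exact he')
      exact this
    filter_upwards [self_mem_nhdsWithin, nhdsWithin_le_nhds hne1,
      nhdsWithin_le_nhds hne2, nhdsWithin_le_nhds hneQ] with θ hθ h1 h2 hQθ
    have hθ' : θ ≠ 0 := hθ
    have h2' : (1 + η * θ) ^ 2 ≠ 0 := pow_ne_zero 2 h2
    have hηe : η * (1 - ξ ^ 2) = 1 := by rw [hη]; field_simp
    have hrw : 1 - ξ ^ 2 * (1 - θ) ^ 2 / (1 + η * θ) ^ 2 = Q θ / (1 + η * θ) ^ 2 := by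
      simp only [hQdef]; rw [sub_div, div_self h2']
    rw [hrw]
    have hhalf : (1:ℝ) / 2 / (Q θ / (1 + η * θ) ^ 2) = (1 + η * θ) ^ 2 / (2 * Q θ) := by
      rw [div_div_eq_mul_div, div_mul_eq_mul_div, mul_comm, div_div]
      congr 1
      ring
    rw [hhalf]
    have hden : 2 * Q θ * (1 + θ) ≠ 0 :=
      mul_ne_zero (mul_ne_zero two_ne_zero hQθ) h1
    rw [div_eq_div_iff hden (pow_ne_zero 2 hθ')]
    have hN : (η / 2 - 1) * (2 * Q θ) * (1 + θ) + 2 * Q θ - (1 + η * θ) ^ 2 = θ * P θ := by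
      simp only [hPdef, hQdef]
      linear_combination hηe
    have expand : (1 + θ * (η / 2 - 1) + θ / (1 + θ) * (1 - (1 + η * θ) ^ 2 / (2 * Q θ)) - 1)
        * (2 * Q θ * (1 + θ))
        = θ * ((η / 2 - 1) * (2 * Q θ) * (1 + θ) + 2 * Q θ - (1 + η * θ) ^ 2) := by
      field_simp
      ring
    rw [expand, hN]
    ring
end

section
/- Fix real numbers λ̄₁ < 0 < λ̄₂, set c = (λ̄₂ − λ̄₁)/2, and fix ā > 0, H̄, Ḡ ∈ ℝ and σ₂⁻ ∈ ℝ. For ε in a neighborhood of 0, consider the 2×2 linear system in (σ₁, σ₂): −(1 + H̄ε)σ₁ + σ₂ = (1 + H̄ε)σ₂⁻ and −(1 − ε)λ̄₁σ₁ + (1 + Ḡε)λ̄₂σ₂ = (1 − ε)λ̄₂σ₂⁻. For ε small the system has a unique solution (σ₁(ε), σ₂(ε)); it satisfies σ₁(0) = 0, σ₂(0) = σ₂⁻, and is differentiable at ε = 0 with σ₁'(0) = −(λ̄₂/(2c))(1 + Ḡ + H̄)σ₂⁻ and σ₂'(0) = −((λ̄₁H̄ + λ̄₂(1 + Ḡ))/(2c))σ₂⁻.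 -/
/- STATEMENT 17: Fix λ̄₁ < 0 < λ̄₂, c = (λ̄₂−λ̄₁)/2, ā > 0, H̄, Ḡ ∈ ℝ, σ₂⁻ ∈ ℝ.
For ε near 0, the 2×2 linear system
  −(1 + H̄ε)σ₁ + σ₂ = (1 + H̄ε)σ₂⁻
  −(1 − ε)λ̄₁σ₁ + (1 + Ḡε)λ̄₂σ₂ = (1 − ε)λ̄₂σ₂⁻
has a unique solution (σ₁(ε), σ₂(ε)); it satisfies σ₁(0) = 0, σ₂(0) = σ₂⁻ and is
differentiable at ε = 0 with σ₁'(0) = −(λ̄₂/(2c))(1 + Ḡ + H̄)σ₂⁻ and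
σ₂'(0) = −((λ̄₁H̄ + λ̄₂(1+Ḡ))/(2c))σ₂⁻. -/

theorem junction_riemann_linear_system
    (lam1 lam2 : ℝ) (h1 : lam1 < 0) (h2 : 0 < lam2)
    (abar : ℝ) (habar : 0 < abar)
    (H G s2m : ℝ) :
    ∃ ε₀ > (0:ℝ), ∃ σ₁ σ₂ : ℝ → ℝ,
      -- for |ε| < ε₀, (σ₁ ε, σ₂ ε) is the unique solution of the system
      (∀ ε : ℝ, |ε| < ε₀ → ∀ y₁ y₂ : ℝ,
        (-(1 + H * ε) * y₁ + y₂ = (1 + H * ε) * s2m ∧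
          -(1 - ε) * lam1 * y₁ + (1 + G * ε) * lam2 * y₂ = (1 - ε) * lam2 * s2m)
        ↔ (y₁ = σ₁ ε ∧ y₂ = σ₂ ε)) ∧
      σ₁ 0 = 0 ∧ σ₂ 0 = s2m ∧
      HasDerivAt σ₁ (-(lam2 / (2 * ((lam2 - lam1) / 2))) * (1 + G + H) * s2m) 0 ∧
      HasDerivAt σ₂
        (-((lam1 * H + lam2 * (1 + G)) / (2 * ((lam2 - lam1) / 2))) * s2m) 0 := by
  set D : ℝ → ℝ := fun ε => -((1 + H * ε) * ((1 + G * ε) * lam2)) + (1 - ε) * lam1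
    with hDdef
  set N₁ : ℝ → ℝ := fun ε => (1 + H * ε) * ((1 + G * ε) * lam2) * s2m - (1 - ε) * lam2 * s2m
    with hN₁def
  set N₂ : ℝ → ℝ := fun ε => (1 + H * ε) * ((1 - ε) * ((lam1 - lam2) * s2m)) with hN₂def
  have hsub : lam1 - lam2 ≠ 0 := by nlinarith
  have hsub2 : lam2 - lam1 ≠ 0 := by nlinarith
  have hD0 : D 0 = lam1 - lam2 := by simp [hDdef]; ring
  have hD0ne : D 0 ≠ 0 := by rw [hD0]; exact hsub
  have hDcont : Continuous D := by fun_prop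
  have hev : ∀ᶠ ε in nhds (0 : ℝ), D ε ≠ 0 :=
    hDcont.continuousAt.eventually_ne hD0ne
  rw [Metric.eventually_nhds_iff] at hev
  obtain ⟨ε₀, hε₀, hDne⟩ := hev
  have hDne' : ∀ ε : ℝ, |ε| < ε₀ → D ε ≠ 0 := by
    intro ε hε
    exact hDne (by simpa [Real.dist_eq] using hε)
  refine ⟨ε₀, hε₀, fun ε => N₁ ε / D ε, fun ε => N₂ ε / D ε, ?_, ?_, ?_, ?_, ?_⟩
  · intro ε hε y₁ y₂
    have hd := hDne' ε hε
    constructor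
    · rintro ⟨e1, e2⟩
      constructor
      · rw [eq_div_iff hd]
        linear_combination ((1 + G * ε) * lam2) * e1 - e2
      · rw [eq_div_iff hd]
        linear_combination ((1 - ε) * lam1) * e1 - (1 + H * ε) * e2
    · rintro ⟨rfl, rfl⟩
      constructor
      · field_simp
        ring
      · field_simp
        ring
  · simp [hN₁def]
  · have hn : N₂ 0 = (lam1 - lam2) * s2m := by simp [hN₂def]
    show N₂ 0 / D 0 = s2m
    rw [hn, hD0]
    field_simp
  · have hN : HasDerivAt N₁ (lam2 * s2m * (H + G + 1)) 0 := by
      have : HasDerivAt (fun ε : ℝ => (1 + H * ε) * ((1 + G * ε) * lam2) * s2m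
          - (1 - ε) * lam2 * s2m)
          (((H * (1 * lam2) + (1 + H * 0) * (G * lam2)) * s2m) - (-1 * lam2 * s2m)) 0 := by
        have h := ((((hasDerivAt_const 0 (1:ℝ)).add ((hasDerivAt_id 0).const_mul H)).mul
          (((hasDerivAt_const 0 (1:ℝ)).add ((hasDerivAt_id 0).const_mul G)).mul_const lam2)).mul_const
          s2m).sub
          ((((hasDerivAt_const 0 (1:ℝ)).sub (hasDerivAt_id 0)).mul_const lam2).mul_const s2m)
        refine h.congr_deriv ?_
        simp only [Pi.add_apply, Pi.sub_apply, id_eq]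
        ring
      convert this using 1
      ring
    have hDd : HasDerivAt D (-(H * lam2 + G * lam2) - lam1) 0 := by
      have : HasDerivAt (fun ε : ℝ => -((1 + H * ε) * ((1 + G * ε) * lam2)) + (1 - ε) * lam1)
          (-((H * ((1 + G * 0) * lam2)) + (1 + H * 0) * (G * lam2)) + (-1) * lam1) 0 := by
        have h := ((((hasDerivAt_const 0 (1:ℝ)).add ((hasDerivAt_id 0).const_mul H)).mul
          (((hasDerivAt_const 0 (1:ℝ)).add ((hasDerivAt_id 0).const_mul G)).mul_const lam2)).neg).add
          (((hasDerivAt_const 0 (1:ℝ)).sub (hasDerivAt_id 0)).mul_const lam1)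
        refine h.congr_deriv ?_
        simp only [Pi.add_apply, Pi.sub_apply, id_eq]
        ring
      convert this using 1
      ring
    have := hN.div hDd hD0ne
    refine this.congr_deriv ?_
    rw [hD0]
    have hN10 : N₁ 0 = 0 := by simp [hN₁def]
    rw [hN10]
    field_simp [hsub, hsub2]
    ring
  · have hN : HasDerivAt N₂ ((H - 1) * ((lam1 - lam2) * s2m)) 0 := by
      have : HasDerivAt (fun ε : ℝ => (1 + H * ε) * ((1 - ε) * ((lam1 - lam2) * s2m)))
          (H * ((1 - 0) * ((lam1 - lam2) * s2m)) + (1 + H * 0) * ((-1) * ((lam1 - lam2) * s2m))) 0 := by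
        have h := ((hasDerivAt_const 0 (1:ℝ)).add ((hasDerivAt_id 0).const_mul H)).mul
          (((hasDerivAt_const 0 (1:ℝ)).sub (hasDerivAt_id 0)).mul_const ((lam1 - lam2) * s2m))
        refine h.congr_deriv ?_
        simp only [Pi.add_apply, Pi.sub_apply, id_eq]
        ring
      convert this using 1
      ring
    have hDd : HasDerivAt D (-(H * lam2 + G * lam2) - lam1) 0 := by
      have : HasDerivAt (fun ε : ℝ => -((1 + H * ε) * ((1 + G * ε) * lam2)) + (1 - ε) * lam1)
          (-((H * ((1 + G * 0) * lam2)) + (1 + H * 0) * (G * lam2)) + (-1) * lam1) 0 := by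
        have h := ((((hasDerivAt_const 0 (1:ℝ)).add ((hasDerivAt_id 0).const_mul H)).mul
          (((hasDerivAt_const 0 (1:ℝ)).add ((hasDerivAt_id 0).const_mul G)).mul_const lam2)).neg).add
          (((hasDerivAt_const 0 (1:ℝ)).sub (hasDerivAt_id 0)).mul_const lam1)
        refine h.congr_deriv ?_
        simp only [Pi.add_apply, Pi.sub_apply, id_eq]
        ring
      convert this using 1
      ring
    have := hN.div hDd hD0ne
    refine this.congr_deriv ?_
    rw [hD0]
    have hN20 : N₂ 0 = (lam1 - lam2) * s2m := by simp [hN₂def]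
    rw [hN20]
    field_simp [hsub, hsub2]
    ring
end

section
/- Let p satisfy (P). Fix a > 0 and u = (ρ,q) ∈ A₀, set v = q/ρ and c² = p'(ρ). Let Σ = (0, Σ₂) be C¹ near (a,a,u) with Σ(α,α;w) = 0 for all α,w, and suppose T(Δa) = (ρ_T(Δa), q_T(Δa)) is differentiable at Δa = 0 with T(0) = u and satisfies, for all Δa near 0, the junction relations (a+Δa) q_T(Δa) − a q = 0 and (a+Δa) P(T(Δa)) − a P(u) − Σ₂(a, a+Δa; u) = 0. Then q_T'(0) = −q/a and ρ_T'(0) = Hρ/a, where H = (v² + (∂_{a⁺}Σ₂(a,a;u) − p(ρ))/ρ)/(c² − v²); that is, to first order T(a, a+Δa; u) = ((1 + H·Δa/a)ρ, (1 − Δa/a)q) + o(Δa). -/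
/- STATEMENT 18: Let p satisfy (P). Fix a > 0 and u = (ρ,q) ∈ A₀, set v = q/ρ and
c² = p'(ρ). Let Σ = (0,Σ₂) be C¹ near (a,a,u) with Σ(α,α;w) = 0 for all α,w, and
suppose T(Δa) = (ρ_T(Δa), q_T(Δa)) is differentiable at Δa = 0 with T(0) = u and
satisfies, for all Δa near 0, (a+Δa) q_T(Δa) − a q = 0 and
(a+Δa) P(T(Δa)) − a P(u) − Σ₂(a,a+Δa;u) = 0. Then q_T'(0) = −q/a and
ρ_T'(0) = Hρ/a, where H = (v² + (∂_{a⁺}Σ₂(a,a;u) − p(ρ))/ρ)/(c² − v²). -/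

noncomputable section

open Filter

theorem junction_map_first_order_expansion
    (p : ℝ → ℝ)
    (hp_reg : ContDiffOn ℝ 2 p (Set.Ioi 0))
    (hp_pos : ∀ ρ > (0:ℝ), p ρ > 0)
    (hp' : ∀ ρ > (0:ℝ), deriv p ρ > 0)
    (hp'' : ∀ ρ > (0:ℝ), deriv (deriv p) ρ ≥ 0)
    (a : ℝ) (ha : 0 < a)
    (u : ℝ × ℝ) (hu : u ∈ subsonicA0 p)
    (Sgm2 : ℝ → ℝ → (ℝ × ℝ) → ℝ)
    -- Σ = (0, Σ₂) is C¹ near (a,a,u)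
    (hSgm0 : ContDiffAt ℝ 1 (fun x : ℝ × ℝ × (ℝ × ℝ) => Sgm2 x.1 x.2.1 x.2.2)
      (a, a, u))
    -- Σ(α,α;w) = 0 for all α,w near (a,u)
    (hSgm1 : ∀ᶠ x : ℝ × (ℝ × ℝ) in nhds (a, u), Sgm2 x.1 x.1 x.2 = 0)
    (T : ℝ → ℝ × ℝ)
    (hTdiff : DifferentiableAt ℝ T 0)
    (hT0 : T 0 = u)
    -- the junction relations hold for all Δa near 0
    (hT1 : ∀ᶠ Δa : ℝ in nhds 0, (a + Δa) * (T Δa).2 - a * u.2 = 0)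
    (hT2 : ∀ᶠ Δa : ℝ in nhds 0,
      (a + Δa) * Pflux p (T Δa) - a * Pflux p u - Sgm2 a (a + Δa) u = 0) :
    HasDerivAt (fun Δa => (T Δa).2) (-(u.2 / a)) 0 ∧
    HasDerivAt (fun Δa => (T Δa).1)
      (((u.2 / u.1) ^ 2
          + (deriv (fun s => Sgm2 a s u) a - p u.1) / u.1)
        / (deriv p u.1 - (u.2 / u.1) ^ 2) * u.1 / a) 0 := by
  obtain ⟨hρ, hl1, hl2⟩ := hu
  have hρne : u.1 ≠ 0 := ne_of_gt hρ
  have hane : a ≠ 0 := ne_of_gt ha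
  have hpρ : deriv p u.1 > 0 := hp' u.1 hρ
  have hv2 : (u.2 / u.1) ^ 2 < deriv p u.1 := by
    have hc2 : soundSpeed p u.1 ^ 2 = deriv p u.1 := Real.sq_sqrt hpρ.le
    have h1 : u.2 / u.1 < soundSpeed p u.1 := by
      simpa [lam1, sub_neg] using hl1
    have h2 : -(soundSpeed p u.1) < u.2 / u.1 := by
      have := hl2; simp only [lam2] at this; linarith
    nlinarith
  have hne : deriv p u.1 - (u.2 / u.1) ^ 2 ≠ 0 := ne_of_gt (by linarith)
  -- component derivatives
  have h1 : HasDerivAt (fun x => (T x).1) (deriv (fun x => (T x).1) 0) 0 :=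
    hTdiff.fst.hasDerivAt
  have h2 : HasDerivAt (fun x => (T x).2) (deriv (fun x => (T x).2) 0) 0 :=
    hTdiff.snd.hasDerivAt
  set d1 := deriv (fun x => (T x).1) 0 with hd1
  set d2 := deriv (fun x => (T x).2) 0 with hd2
  have haff : HasDerivAt (fun Δa : ℝ => a + Δa) 1 0 := (hasDerivAt_id 0).const_add a
  -- q part
  have hF : HasDerivAt (fun Δa => (a + Δa) * (T Δa).2)
      (1 * (T 0).2 + (a + 0) * d2) 0 := haff.mul h2
  have hF0 : HasDerivAt (fun Δa => (a + Δa) * (T Δa).2) 0 0 := by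
    have hc : HasDerivAt (fun _ : ℝ => a * u.2) 0 0 := hasDerivAt_const 0 _
    exact hc.congr_of_eventuallyEq (by filter_upwards [hT1] with x hx; linarith)
  have hd2eq : d2 = -(u.2 / a) := by
    have := hF.unique hF0
    rw [hT0] at this
    field_simp at this ⊢
    linarith
  refine ⟨hd2eq ▸ h2, ?_⟩
  -- derivative of Σ₂ slice
  have hS : DifferentiableAt ℝ (fun s => Sgm2 a s u) a := by
    have hFd := hSgm0.differentiableAt (by norm_num)
    have hg : DifferentiableAt ℝ (fun s : ℝ => ((a, s, u) : ℝ × ℝ × (ℝ × ℝ))) a :=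
      (differentiableAt_const a).prodMk
        ((differentiableAt_fun_id).prodMk (differentiableAt_const u))
    exact hFd.comp a hg
  set D := deriv (fun s => Sgm2 a s u) a with hD
  have hSder : HasDerivAt (fun s => Sgm2 a s u) D a := hS.hasDerivAt
  have hSder' : HasDerivAt (fun s => Sgm2 a s u) D (a + 0) := by
    rw [add_zero]; exact hSder
  have hScomp : HasDerivAt (fun Δa => Sgm2 a (a + Δa) u) (D * 1) 0 :=
    hSder'.comp 0 haff
  -- derivative of Pflux ∘ T
  have hpd : HasDerivAt p (deriv p u.1) u.1 :=
    (((hp_reg.contDiffAt (Ioi_mem_nhds hρ)).differentiableAt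
      (by norm_num)).hasDerivAt)
  have hpc : HasDerivAt (fun x => p ((T x).1)) (deriv p u.1 * d1) 0 := by
    have := (hT0 ▸ hpd : HasDerivAt p (deriv p u.1) (T 0).1).comp 0 h1
    exact this
  have hq2 : HasDerivAt (fun x => (T x).2 ^ 2) (2 * (T 0).2 ^ 1 * d2) 0 := h2.pow 2
  have hdiv : HasDerivAt (fun x => (T x).2 ^ 2 / (T x).1)
      ((2 * (T 0).2 ^ 1 * d2 * (T 0).1 - (T 0).2 ^ 2 * d1) / (T 0).1 ^ 2) 0 :=
    hq2.div h1 (by rw [hT0]; exact hρne)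
  have hP : HasDerivAt (fun x => Pflux p (T x))
      ((2 * (T 0).2 ^ 1 * d2 * (T 0).1 - (T 0).2 ^ 2 * d1) / (T 0).1 ^ 2
        + deriv p u.1 * d1) 0 := hdiv.add hpc
  have hG : HasDerivAt (fun Δa => (a + Δa) * Pflux p (T Δa) - Sgm2 a (a + Δa) u)
      ((1 * Pflux p (T 0) + (a + 0) *
        ((2 * (T 0).2 ^ 1 * d2 * (T 0).1 - (T 0).2 ^ 2 * d1) / (T 0).1 ^ 2
          + deriv p u.1 * d1)) - D * 1) 0 := (haff.mul hP).sub hScomp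
  have hG0 : HasDerivAt (fun Δa => (a + Δa) * Pflux p (T Δa) - Sgm2 a (a + Δa) u) 0 0 := by
    have hc : HasDerivAt (fun _ : ℝ => a * Pflux p u) 0 0 := hasDerivAt_const 0 _
    exact hc.congr_of_eventuallyEq (by filter_upwards [hT2] with x hx; linarith)
  have heq := hG.unique hG0
  rw [hT0] at heq
  simp only [Pflux, pow_one, add_zero, one_mul, mul_one] at heq
  have hd1eq : ((u.2 / u.1) ^ 2 + (D - p u.1) / u.1)
      / (deriv p u.1 - (u.2 / u.1) ^ 2) * u.1 / a = d1 := by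
    rw [hd2eq] at heq
    have hq2lt : u.2 ^ 2 < deriv p u.1 * u.1 ^ 2 := by
      have h := hv2
      rw [div_pow, div_lt_iff₀ (by positivity : (0:ℝ) < u.1 ^ 2)] at h
      linarith
    have hden : u.1 ^ 2 * u.1 * (deriv p u.1 * u.1 ^ 2 - u.2 ^ 2) * a ≠ 0 := by
      have : deriv p u.1 * u.1 ^ 2 - u.2 ^ 2 ≠ 0 := ne_of_gt (by linarith)
      positivity
    have hne3 : deriv p u.1 * u.1 ^ 2 - u.2 ^ 2 ≠ 0 := ne_of_gt (by linarith)
    field_simp [hne3] at heq ⊢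
    have heq2 : (u.2 ^ 2 + p u.1 * u.1) * u.1 ^ 2 +
        (-(2 * u.2 * u.2 * u.1) - a * (u.2 ^ 2 * d1) + deriv p u.1 * d1 * (a * u.1 ^ 2)) * u.1 -
        u.1 * u.1 ^ 2 * D = 0 := by
      apply mul_left_cancel₀ hane
      linear_combination (a * u.1) * heq
    rw [div_eq_iff (by linarith : u.1 ^ 2 * deriv p u.1 - u.2 ^ 2 ≠ 0)]
    linear_combination -heq
  exact hd1eq ▸ h1

end
end
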